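/- Let t > 0. For z ∈ ℂ with 0 < |z| < min{2t, 2π}, define Ĥ(t,z) = coth(z/2) + ∑_{k=1}^{∞} [coth((z−2kt)/2) + coth((z+2kt)/2)]; the series converges locally uniformly on this punctured region. Moreover, the series ∑_{k=1}^{∞} 1/sinh²(kt) converges, and lim_{z→0} (Ĥ(t,z) − 2/z)/z = 1/6 − ∑_{k=1}^{∞} 1/sinh²(kt). -/

import Mathlib

open Complex Filter

noncomputable def ccoth (z : ℂ) : ℂ := Complex.cosh z / Complex.sinh z

noncomputable def HHat (t : ℝ) (z : ℂ) : ℂ :=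
  ccoth (z / 2) + ∑' k : ℕ,
    (ccoth ((z - 2 * ((k : ℂ) + 1) * (t : ℂ)) / 2)
      + ccoth ((z + 2 * ((k : ℂ) + 1) * (t : ℂ)) / 2))

noncomputable def sterm (t : ℝ) (k : ℕ) (z : ℂ) : ℂ :=
  ccoth ((z - 2 * ((k : ℂ) + 1) * (t : ℂ)) / 2)
      + ccoth ((z + 2 * ((k : ℂ) + 1) * (t : ℂ)) / 2)

lemma HHat_eq (t : ℝ) (z : ℂ) : HHat t z = ccoth (z / 2) + ∑' k : ℕ, sterm t k z := rfl

lemma cast_c (t : ℝ) (k : ℕ) : (2 * ((k : ℂ) + 1) * (t : ℂ)) = ((2 * ((k:ℝ)+1) * t : ℝ) : ℂ) := by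
  push_cast; ring

lemma sinh_ne_zero_of_re {w : ℂ} (h : w.re ≠ 0) : Complex.sinh w ≠ 0 := by
  intro hw
  have h1 : Complex.sin (w * I) = 0 := by rw [Complex.sin_mul_I, hw, zero_mul]
  rw [Complex.sin_eq_zero_iff] at h1
  obtain ⟨k, hk⟩ := h1
  apply h
  have : w = (k : ℂ) * (Real.pi : ℂ) / I := by
    rw [eq_div_iff Complex.I_ne_zero]; exact hk
  rw [this]; simp [Complex.div_I]

lemma sinh_half_ne_zero {z : ℂ} (h0 : z ≠ 0) (h : ‖z‖ < 2 * Real.pi) :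
    Complex.sinh (z / 2) ≠ 0 := by
  intro hw
  have h1 : Complex.sin (z / 2 * I) = 0 := by rw [Complex.sin_mul_I, hw, zero_mul]
  rw [Complex.sin_eq_zero_iff] at h1
  obtain ⟨k, hk⟩ := h1
  have habs : ‖z‖ / 2 * 1 = |(k:ℝ)| * Real.pi := by
    have := congrArg norm hk
    simpa [map_mul, Complex.norm_real, abs_of_pos Real.pi_pos, norm_div] using this
  have hk0 : k = 0 := by
    by_contra hne
    have : (1:ℝ) ≤ |(k:ℝ)| := by
      have : (1:ℤ) ≤ |k| := Int.one_le_abs hne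
      calc (1:ℝ) ≤ ((|k| : ℤ) : ℝ) := by exact_mod_cast this
        _ = |(k:ℝ)| := by push_cast; rfl
    nlinarith [Real.pi_pos]
  rw [hk0] at hk
  simp only [Int.cast_zero, zero_mul] at hk
  apply h0
  simpa [div_eq_zero_iff, Complex.I_ne_zero, mul_eq_zero] using hk

lemma abs_sinh_le (z : ℂ) : ‖Complex.sinh z‖ ≤ Real.cosh (‖z‖) := by
  have h : Complex.sinh z = (Complex.exp z - Complex.exp (-z)) / 2 := rfl
  rw [h]
  have h1 : ‖Complex.exp z - Complex.exp (-z)‖ ≤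
      Real.exp z.re + Real.exp (-z.re) := by
    calc ‖Complex.exp z - Complex.exp (-z)‖
        ≤ ‖Complex.exp z‖ + ‖Complex.exp (-z)‖ :=
          norm_sub_le _ _
      _ = Real.exp z.re + Real.exp (-z.re) := by simp [Complex.norm_exp]
  have h2 : Real.cosh z.re ≤ Real.cosh (‖z‖) := by
    rw [Real.cosh_le_cosh, _root_.abs_of_nonneg (norm_nonneg z)]
    exact Complex.abs_re_le_norm z
  calc ‖(Complex.exp z - Complex.exp (-z)) / 2‖
      = ‖Complex.exp z - Complex.exp (-z)‖ / 2 := by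
        simp [norm_div]
    _ ≤ (Real.exp z.re + Real.exp (-z.re)) / 2 := by linarith
    _ = Real.cosh z.re := (Real.cosh_eq _).symm
    _ ≤ Real.cosh (‖z‖) := h2

lemma abs_cosh_le (z : ℂ) : ‖Complex.cosh z‖ ≤ Real.cosh (‖z‖) := by
  have h : Complex.cosh z = (Complex.exp z + Complex.exp (-z)) / 2 := rfl
  rw [h]
  have h1 : ‖Complex.exp z + Complex.exp (-z)‖ ≤
      Real.exp z.re + Real.exp (-z.re) := by
    calc ‖Complex.exp z + Complex.exp (-z)‖
        ≤ ‖Complex.exp z‖ + ‖Complex.exp (-z)‖ :=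
          norm_add_le _ _
      _ = Real.exp z.re + Real.exp (-z.re) := by simp [Complex.norm_exp]
  have h2 : Real.cosh z.re ≤ Real.cosh (‖z‖) := by
    rw [Real.cosh_le_cosh, _root_.abs_of_nonneg (norm_nonneg z)]
    exact Complex.abs_re_le_norm z
  calc ‖(Complex.exp z + Complex.exp (-z)) / 2‖
      = ‖Complex.exp z + Complex.exp (-z)‖ / 2 := by simp [norm_div]
    _ ≤ (Real.exp z.re + Real.exp (-z.re)) / 2 := by linarith
    _ = Real.cosh z.re := (Real.cosh_eq _).symm
    _ ≤ Real.cosh (‖z‖) := h2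

lemma sterm_eq {t : ℝ} (ht : 0 < t) {z : ℂ} (hz : ‖z‖ < 2 * t) (k : ℕ) :
    sterm t k z = 2 * Complex.sinh z /
      (Complex.cosh z - Complex.cosh ((2 * ((k:ℝ) + 1) * t : ℝ) : ℂ)) := by
  set c : ℝ := 2 * ((k:ℝ) + 1) * t with hc
  have hcast : (2 * ((k : ℂ) + 1) * (t : ℂ)) = ((c : ℝ) : ℂ) := by push_cast [hc]; ring
  have hct : 2 * t ≤ c := by
    have hk0 : (0:ℝ) ≤ (k:ℝ) := Nat.cast_nonneg k
    nlinarith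
  have hrez : |z.re| < c := lt_of_le_of_lt (Complex.abs_re_le_norm z) (lt_of_lt_of_le hz hct)
  set a : ℂ := (z - c) / 2 with ha
  set b : ℂ := (z + c) / 2 with hb
  have hra : a.re ≠ 0 := by
    have : a.re = (z.re - c) / 2 := by
      rw [ha]; simp [Complex.sub_re, Complex.div_re, Complex.ofReal_re]
    rw [this]
    have := abs_lt.mp hrez
    intro h; apply absurd h; intro h'; nlinarith [this.2]
  have hrb : b.re ≠ 0 := by
    have : b.re = (z.re + c) / 2 := by
      rw [hb]; simp [Complex.add_re, Complex.div_re, Complex.ofReal_re]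
    rw [this]
    have := abs_lt.mp hrez
    intro h'; nlinarith [this.1]
  have hsa : Complex.sinh a ≠ 0 := sinh_ne_zero_of_re hra
  have hsb : Complex.sinh b ≠ 0 := sinh_ne_zero_of_re hrb
  have hab : a + b = z := by rw [ha, hb]; ring
  have hba : b - a = (c : ℂ) := by rw [ha, hb]; ring
  have h1 : Complex.sinh z = Complex.sinh a * Complex.cosh b + Complex.cosh a * Complex.sinh b := by
    rw [← hab, Complex.sinh_add]
  have h2 : Complex.cosh z = Complex.cosh a * Complex.cosh b + Complex.sinh a * Complex.sinh b := by
    rw [← hab, Complex.cosh_add]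
  have h3 : Complex.cosh ((c:ℝ):ℂ) = Complex.cosh b * Complex.cosh a
      - Complex.sinh b * Complex.sinh a := by
    rw [← hba, Complex.cosh_sub]
  have hden : Complex.cosh z - Complex.cosh ((c:ℝ):ℂ) = 2 * (Complex.sinh a * Complex.sinh b) := by
    rw [h2, h3]; ring
  rw [sterm]
  rw [show ((z - 2 * ((k : ℂ) + 1) * (t : ℂ)) / 2) = a by rw [ha, hcast]]
  rw [show ((z + 2 * ((k : ℂ) + 1) * (t : ℂ)) / 2) = b by rw [hb, hcast]]
  rw [ccoth, ccoth, hden, h1]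
  field_simp
  ring

lemma sterm_bound {t : ℝ} (ht : 0 < t) {r : ℝ} (hr0 : 0 ≤ r) (hr : r < 2 * t)
    (k : ℕ) {z : ℂ} (hz : ‖z‖ ≤ r) :
    ‖sterm t k z‖ ≤
      (4 * Real.cosh r * Real.cosh (2*t) / (Real.cosh (2*t) - Real.cosh r) * Real.exp (-(2*t)))
        * Real.exp (-(2*t)) ^ k := by
  set c : ℝ := 2 * ((k:ℝ) + 1) * t with hc
  have hct : 2 * t ≤ c := by
    have hk0 : (0:ℝ) ≤ (k:ℝ) := Nat.cast_nonneg k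
    nlinarith
  have hcr : Real.cosh r < Real.cosh (2*t) := by
    rw [Real.cosh_lt_cosh, _root_.abs_of_nonneg hr0, _root_.abs_of_pos (by linarith : (0:ℝ) < 2*t)]
    exact hr
  have hcc : Real.cosh (2*t) ≤ Real.cosh c := by
    rw [Real.cosh_le_cosh, _root_.abs_of_pos (by linarith : (0:ℝ) < 2*t),
      _root_.abs_of_pos (by linarith : (0:ℝ) < c)]
    exact hct
  have hchr1 : (1:ℝ) ≤ Real.cosh r := Real.one_le_cosh r
  have heq := sterm_eq ht (lt_of_le_of_lt hz hr) k
  rw [heq, ← hc]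
  -- numerator bound
  have hnum : ‖2 * Complex.sinh z‖ ≤ 2 * Real.cosh r := by
    rw [norm_mul]
    have h1 : ‖Complex.sinh z‖ ≤ Real.cosh r := by
      refine le_trans (abs_sinh_le z) ?_
      rw [Real.cosh_le_cosh, _root_.abs_of_nonneg (norm_nonneg z),
        _root_.abs_of_nonneg hr0]
      exact hz
    simpa using by nlinarith [norm_nonneg (Complex.sinh z)]
  -- denominator bound
  have hcoshz : ‖Complex.cosh z‖ ≤ Real.cosh r := by
    refine le_trans (abs_cosh_le z) ?_
    rw [Real.cosh_le_cosh, _root_.abs_of_nonneg (norm_nonneg z), _root_.abs_of_nonneg hr0]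
    exact hz
  have hden : Real.cosh c - Real.cosh r ≤
      ‖Complex.cosh z - Complex.cosh ((c:ℝ):ℂ)‖ := by
    have h1 : ‖Complex.cosh ((c:ℝ):ℂ)‖ = Real.cosh c := by
      rw [← Complex.ofReal_cosh, Complex.norm_real, Real.norm_eq_abs,
        _root_.abs_of_pos (lt_of_lt_of_le (by positivity : (0:ℝ) < 1) (Real.one_le_cosh c))]
    calc Real.cosh c - Real.cosh r
        ≤ ‖Complex.cosh ((c:ℝ):ℂ)‖ - ‖Complex.cosh z‖ := by
          rw [h1]; linarith
      _ ≤ ‖Complex.cosh ((c:ℝ):ℂ) - Complex.cosh z‖ := by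
          exact norm_sub_norm_le _ _
      _ = ‖Complex.cosh z - Complex.cosh ((c:ℝ):ℂ)‖ := by
          rw [norm_sub_rev]
  have hdenpos : (0:ℝ) < Real.cosh c - Real.cosh r := by linarith
  -- key chain
  have hkey : Real.cosh c * ((Real.cosh (2*t) - Real.cosh r) / Real.cosh (2*t))
      ≤ Real.cosh c - Real.cosh r := by
    have hc2t : (0:ℝ) < Real.cosh (2*t) := by nlinarith [Real.one_le_cosh (2*t)]
    rw [← mul_div_assoc, div_le_iff₀ hc2t]
    nlinarith
  have hexp : Real.exp c / 2 ≤ Real.cosh c := by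
    rw [Real.cosh_eq]
    have := Real.exp_pos (-c)
    linarith
  have habs : ‖2 * Complex.sinh z /
      (Complex.cosh z - Complex.cosh ((c:ℝ):ℂ))‖ ≤ 2 * Real.cosh r / (Real.cosh c - Real.cosh r) := by
    rw [norm_div]
    exact div_le_div₀ (by positivity) hnum hdenpos hden
  refine le_trans habs ?_
  have hc2t : (0:ℝ) < Real.cosh (2*t) := by nlinarith [Real.one_le_cosh (2*t)]
  have hdel : (0:ℝ) < (Real.cosh (2*t) - Real.cosh r) / Real.cosh (2*t) := by
    apply div_pos (by linarith) hc2t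
  have hkey2 : Real.exp c / 2 * ((Real.cosh (2*t) - Real.cosh r) / Real.cosh (2*t))
      ≤ Real.cosh c - Real.cosh r := by
    refine le_trans ?_ hkey
    apply mul_le_mul_of_nonneg_right hexp (le_of_lt hdel)
  have hec : Real.exp (-(2*t)) * Real.exp (-(2*t)) ^ k = Real.exp (-c) := by
    rw [← Real.exp_nat_mul, ← Real.exp_add, hc]
    congr 1
    push_cast
    ring
  have hrepos : (0:ℝ) < Real.exp c / 2 * ((Real.cosh (2*t) - Real.cosh r) / Real.cosh (2*t)) := by
    have := Real.exp_pos c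
    apply mul_pos (by linarith) hdel
  have h1 : 2 * Real.cosh r / (Real.cosh c - Real.cosh r)
      ≤ 2 * Real.cosh r / (Real.exp c / 2 * ((Real.cosh (2*t) - Real.cosh r) / Real.cosh (2*t))) :=
    div_le_div_of_nonneg_left (by linarith) hrepos hkey2
  refine le_trans h1 ?_
  rw [mul_assoc, hec]
  rw [Real.exp_neg]
  apply le_of_eq
  have e1 : Real.exp c ≠ 0 := ne_of_gt (Real.exp_pos c)
  have e2 : Real.cosh (2*t) ≠ 0 := ne_of_gt hc2t
  have e3 : Real.cosh (2*t) - Real.cosh r ≠ 0 := ne_of_gt (by linarith)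
  field_simp
  ring

lemma geom_summable {t : ℝ} (ht : 0 < t) (C : ℝ) :
    Summable (fun k : ℕ => C * Real.exp (-(2*t)) ^ k) := by
  apply Summable.mul_left
  exact summable_geometric_of_lt_one (le_of_lt (Real.exp_pos _))
    (Real.exp_lt_one_iff.mpr (by linarith))

lemma summable_inv_sinh {t : ℝ} (ht : 0 < t) :
    Summable (fun k : ℕ => 1 / Real.sinh (((k : ℝ) + 1) * t) ^ 2) := by
  have hst : 0 < Real.sinh t := Real.sinh_pos_iff.mpr ht
  refine Summable.of_nonneg_of_le (fun k => by positivity) (fun k => ?_)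
    (geom_summable ht (1 / Real.sinh t ^ 2))
  have hu1 : (1:ℝ) ≤ Real.exp ((k:ℝ) * t) := by
    rw [← Real.exp_zero]
    exact Real.exp_le_exp.mpr (by positivity)
  have hv1 : (1:ℝ) ≤ Real.exp t := by
    rw [← Real.exp_zero]; exact Real.exp_le_exp.mpr (le_of_lt ht)
  have hlow : Real.exp ((k:ℝ) * t) * Real.sinh t ≤ Real.sinh (((k : ℝ) + 1) * t) := by
    rw [Real.sinh_eq, Real.sinh_eq]
    set u := Real.exp ((k:ℝ) * t)
    set v := Real.exp t
    have huv : Real.exp (((k:ℝ) + 1) * t) = u * v := by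
      rw [← Real.exp_add]; congr 1; ring
    have huvn : Real.exp (-(((k:ℝ) + 1) * t)) = (u * v)⁻¹ := by
      rw [Real.exp_neg, huv]
    have hvn : Real.exp (-t) = v⁻¹ := Real.exp_neg t
    rw [huv, huvn, hvn]
    have hu0 : 0 < u := Real.exp_pos _
    have hv0 : 0 < v := Real.exp_pos _
    rw [mul_inv]
    have huu : u * u⁻¹ = 1 := mul_inv_cancel₀ (ne_of_gt hu0)
    have hvv : v * v⁻¹ = 1 := mul_inv_cancel₀ (ne_of_gt hv0)
    have huinv : 0 < u⁻¹ := by positivity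
    have hvinv : 0 < v⁻¹ := by positivity
    have hux : u⁻¹ ≤ u := by
      rw [inv_le_iff_one_le_mul₀ hu0]; nlinarith
    nlinarith [mul_le_mul_of_nonneg_right hux (le_of_lt hvinv)]
  have hs2 : Real.exp ((k:ℝ) * t) ^ 2 * Real.sinh t ^ 2 ≤ Real.sinh (((k : ℝ) + 1) * t) ^ 2 := by
    have h0 : 0 ≤ Real.exp ((k:ℝ) * t) * Real.sinh t := by positivity
    nlinarith
  have hpos : 0 < Real.exp ((k:ℝ) * t) ^ 2 * Real.sinh t ^ 2 := by positivity
  calc 1 / Real.sinh (((k : ℝ) + 1) * t) ^ 2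
      ≤ 1 / (Real.exp ((k:ℝ) * t) ^ 2 * Real.sinh t ^ 2) := by
        apply one_div_le_one_div_of_le hpos hs2
    _ = (1 / Real.sinh t ^ 2) * Real.exp (-(2*t)) ^ k := by
        have hE : Real.exp (-(2*t)) ^ k * Real.exp ((k:ℝ)*t) ^ 2 = 1 := by
          rw [← Real.exp_nat_mul, ← Real.exp_nat_mul, ← Real.exp_add,
            show (k:ℝ)*(-(2*t)) + ((2:ℕ):ℝ)*((k:ℝ)*t) = 0 by push_cast; ring]
          exact Real.exp_zero
        rw [div_eq_iff (ne_of_gt hpos)]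
        have hsne : Real.sinh t ^ 2 ≠ 0 := by positivity
        rw [show (1 / Real.sinh t ^ 2) * Real.exp (-(2*t)) ^ k * (Real.exp ((k:ℝ)*t) ^ 2 * Real.sinh t ^ 2) = Real.exp (-(2*t)) ^ k * Real.exp ((k:ℝ)*t) ^ 2 * (Real.sinh t ^ 2 / Real.sinh t ^ 2) by ring, div_self hsne, hE, mul_one]

lemma sterm_TU {t : ℝ} (ht : 0 < t) {r : ℝ} (hr0 : 0 ≤ r) (hr : r < 2 * t)
    {s : Set ℂ} (hs : ∀ z ∈ s, ‖z‖ ≤ r) :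
    TendstoUniformlyOn (fun N z => ∑ k ∈ Finset.range N, sterm t k z)
      (fun z => ∑' k, sterm t k z) atTop s := by
  apply tendstoUniformlyOn_tsum_nat (geom_summable ht _)
  intro n x hx
  exact sterm_bound ht hr0 hr n (hs x hx)

lemma sterm_TU_compact {t : ℝ} (ht : 0 < t) {K : Set ℂ} (hK : IsCompact K)
    (hKb : K ⊆ Metric.ball (0:ℂ) (2*t)) :
    TendstoUniformlyOn (fun N z => ∑ k ∈ Finset.range N, sterm t k z)
      (fun z => ∑' k, sterm t k z) atTop K := by
  rcases K.eq_empty_or_nonempty with hE | hne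
  · subst hE
    intro u hu
    filter_upwards with n x hx
    exact absurd hx (by simp)
  · obtain ⟨z₀, hz₀, hmax'⟩ := hK.exists_isMaxOn hne continuous_norm.continuousOn
    have hmax : ∀ z ∈ K, ‖z‖ ≤ ‖z₀‖ := fun z hz => hmax' hz
    have hr : ‖z₀‖ < 2 * t := by
      have := hKb hz₀
      rwa [Metric.mem_ball, dist_zero_right] at this
    exact sterm_TU ht (norm_nonneg z₀) hr hmax

lemma sterm_TLU {t : ℝ} (ht : 0 < t) :
    TendstoLocallyUniformlyOn (fun N z => ∑ k ∈ Finset.range N, sterm t k z)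
      (fun z => ∑' k, sterm t k z) atTop (Metric.ball (0:ℂ) (2*t)) := by
  rw [tendstoLocallyUniformlyOn_iff_forall_isCompact Metric.isOpen_ball]
  intro K hKs hK
  exact sterm_TU_compact ht hK hKs

lemma re_ne_aux {t : ℝ} (ht : 0 < t) {z : ℂ} (hz : ‖z‖ < 2 * t) (k : ℕ) :
    ((z - 2 * ((k : ℂ) + 1) * (t : ℂ)) / 2).re ≠ 0 ∧
    ((z + 2 * ((k : ℂ) + 1) * (t : ℂ)) / 2).re ≠ 0 := by
  set c : ℝ := 2 * ((k:ℝ) + 1) * t with hc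
  have hcast : (2 * ((k : ℂ) + 1) * (t : ℂ)) = ((c : ℝ) : ℂ) := by push_cast [hc]; ring
  have hct : 2 * t ≤ c := by
    have hk0 : (0:ℝ) ≤ (k:ℝ) := Nat.cast_nonneg k
    nlinarith
  have hrez : |z.re| < c := lt_of_le_of_lt (Complex.abs_re_le_norm z) (lt_of_lt_of_le hz hct)
  have h1 := abs_lt.mp hrez
  rw [hcast]
  constructor
  · have : ((z - (c:ℂ)) / 2).re = (z.re - c) / 2 := by
      simp [Complex.sub_re, Complex.div_re, Complex.ofReal_re]
    rw [this]
    intro h'; nlinarith [h1.2]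
  · have : ((z + (c:ℂ)) / 2).re = (z.re + c) / 2 := by
      simp [Complex.add_re, Complex.div_re, Complex.ofReal_re]
    rw [this]
    intro h'; nlinarith [h1.1]

lemma ccoth_hasDerivAt {C : ℂ} {z : ℂ} (hs : Complex.sinh ((z + C) / 2) ≠ 0) :
    HasDerivAt (fun y : ℂ => ccoth ((y + C) / 2))
      (-(1/2) / Complex.sinh ((z + C) / 2) ^ 2) z := by
  have hu : HasDerivAt (fun y : ℂ => (y + C) / 2) (1/2) z := by
    simpa using ((hasDerivAt_id z).add_const C).div_const 2
  set w : ℂ := (z + C) / 2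
  have hcosh : HasDerivAt (fun y : ℂ => Complex.cosh ((y + C) / 2))
      (Complex.sinh w * (1/2)) z := by have := (Complex.hasDerivAt_cosh w).comp z hu; exact this
  have hsinh : HasDerivAt (fun y : ℂ => Complex.sinh ((y + C) / 2))
      (Complex.cosh w * (1/2)) z := by have := (Complex.hasDerivAt_sinh w).comp z hu; exact this
  have hdiv := hcosh.div hsinh hs
  have hval : (Complex.sinh w * (1/2) * Complex.sinh w
      - Complex.cosh w * (Complex.cosh w * (1/2))) / Complex.sinh w ^ 2
      = -(1/2) / Complex.sinh w ^ 2 := by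
    have hid := Complex.cosh_sq_sub_sinh_sq w
    rw [div_eq_div_iff (pow_ne_zero 2 hs) (pow_ne_zero 2 hs)]
    linear_combination (-(1/2) * Complex.sinh w ^ 2) * hid
  rw [hval] at hdiv
  exact hdiv

lemma sterm_hasDerivAt {t : ℝ} (ht : 0 < t) {z : ℂ} (hz : ‖z‖ < 2 * t) (k : ℕ) :
    HasDerivAt (sterm t k)
      (-(1/2) / Complex.sinh ((z - 2 * ((k : ℂ) + 1) * (t : ℂ)) / 2) ^ 2
        + -(1/2) / Complex.sinh ((z + 2 * ((k : ℂ) + 1) * (t : ℂ)) / 2) ^ 2) z := by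
  obtain ⟨h1, h2⟩ := re_ne_aux ht hz k
  have hs1 := sinh_ne_zero_of_re h1
  have hs2 := sinh_ne_zero_of_re h2
  have d1 : HasDerivAt (fun y : ℂ => ccoth ((y + -(2 * ((k : ℂ) + 1) * (t : ℂ))) / 2))
      (-(1/2) / Complex.sinh ((z + -(2 * ((k : ℂ) + 1) * (t : ℂ))) / 2) ^ 2) z :=
    ccoth_hasDerivAt (by rw [show z + -(2 * ((k : ℂ) + 1) * (t : ℂ)) = z - 2 * ((k : ℂ) + 1) * (t : ℂ) by ring]; exact hs1)
  have d2 : HasDerivAt (fun y : ℂ => ccoth ((y + 2 * ((k : ℂ) + 1) * (t : ℂ)) / 2))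
      (-(1/2) / Complex.sinh ((z + 2 * ((k : ℂ) + 1) * (t : ℂ)) / 2) ^ 2) z :=
    ccoth_hasDerivAt hs2
  have := d1.add d2
  have hfun : (fun y : ℂ => ccoth ((y + -(2 * ((k : ℂ) + 1) * (t : ℂ))) / 2)
      + ccoth ((y + 2 * ((k : ℂ) + 1) * (t : ℂ)) / 2)) = sterm t k := by
    funext y
    rw [sterm, show y + -(2 * ((k : ℂ) + 1) * (t : ℂ)) = y - 2 * ((k : ℂ) + 1) * (t : ℂ) by ring]
  rw [show ((fun y : ℂ => ccoth ((y + -(2 * ((k : ℂ) + 1) * (t : ℂ))) / 2)) + fun y : ℂ => ccoth ((y + 2 * ((k : ℂ) + 1) * (t : ℂ)) / 2)) = sterm t k from hfun] at this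
  rw [show z + -(2 * ((k : ℂ) + 1) * (t : ℂ)) = z - 2 * ((k : ℂ) + 1) * (t : ℂ) by ring] at this
  exact this

lemma ccoth_neg (w : ℂ) : ccoth (-w) = - ccoth w := by
  rw [ccoth, ccoth, Complex.sinh_neg, Complex.cosh_neg, div_neg]

lemma sterm_zero {t : ℝ} (k : ℕ) : sterm t k 0 = 0 := by
  rw [sterm,
    show ((0:ℂ) - 2 * ((k : ℂ) + 1) * (t : ℂ)) / 2 = -((2 * ((k : ℂ) + 1) * (t : ℂ))/2) by ring,
    show ((0:ℂ) + 2 * ((k : ℂ) + 1) * (t : ℂ)) / 2 = (2 * ((k : ℂ) + 1) * (t : ℂ))/2 by ring,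
    ccoth_neg]
  ring

lemma sterm_deriv_zero {t : ℝ} (ht : 0 < t) (k : ℕ) :
    HasDerivAt (sterm t k) (-(((1 / Real.sinh (((k:ℝ)+1)*t)^2 : ℝ)) : ℂ)) 0 := by
  have h0 : ‖(0:ℂ)‖ < 2*t := by
    rw [norm_zero]; linarith
  have h := sterm_hasDerivAt ht h0 k
  have e1 : ((0:ℂ) - 2 * ((k : ℂ) + 1) * (t : ℂ)) / 2 = -((((k:ℝ)+1)*t : ℝ) : ℂ) := by
    push_cast; ring
  have e2 : ((0:ℂ) + 2 * ((k : ℂ) + 1) * (t : ℂ)) / 2 = ((((k:ℝ)+1)*t : ℝ) : ℂ) := by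
    push_cast; ring
  rw [e1, e2, Complex.sinh_neg, neg_pow, ← Complex.ofReal_sinh] at h
  have : -(1/2) / ((-1) ^ 2 * ((Real.sinh (((k:ℝ)+1)*t) : ℝ):ℂ) ^ 2)
      + -(1/2) / ((Real.sinh (((k:ℝ)+1)*t) : ℝ):ℂ) ^ 2
      = -(((1 / Real.sinh (((k:ℝ)+1)*t)^2 : ℝ)) : ℂ) := by
    by_cases hs : Complex.sinh (((k:ℂ)+1)*(t:ℂ)) = 0
    · push_cast [Complex.ofReal_sinh]
      rw [hs]; simp
    · push_cast [Complex.ofReal_sinh]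
      field_simp
      ring
  rw [this] at h
  exact h

noncomputable def psiC (w : ℂ) : ℂ := Complex.exp w * (w - 1) + Complex.exp (-w) * (w + 1)

lemma psi_tendsto :
    Tendsto (fun w : ℂ => psiC w / w ^ 3) (nhdsWithin 0 {(0:ℂ)}ᶜ) (nhds (2/3)) := by
  rw [tendsto_iff_norm_sub_tendsto_zero]
  have hbd : ∀ᶠ w : ℂ in nhdsWithin 0 {(0:ℂ)}ᶜ,
      ‖psiC w / w ^ 3 - 2/3‖ ≤ 4 * ‖w‖ := by
    have h1 : ∀ᶠ w : ℂ in nhdsWithin 0 {(0:ℂ)}ᶜ, ‖w‖ ≤ 1 := by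
      apply Filter.Eventually.filter_mono nhdsWithin_le_nhds
      filter_upwards [Metric.closedBall_mem_nhds (0:ℂ) one_pos] with w hw
      rwa [Metric.mem_closedBall, dist_zero_right] at hw
    have h2 : ∀ᶠ w : ℂ in nhdsWithin 0 {(0:ℂ)}ᶜ, w ≠ 0 := by
      filter_upwards [self_mem_nhdsWithin] with w hw
      simpa using hw
    filter_upwards [h1, h2] with w hw1 hw2
    set P : ℂ → ℂ := fun x => 1 + x + x^2/2 + x^3/6 with hP
    have hPsum : ∀ x : ℂ, (∑ m ∈ Finset.range 4, x ^ m / (m.factorial : ℂ)) = P x := by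
      intro x
      rw [hP]
      simp [Finset.sum_range_succ, Nat.factorial]
    have hE1 : ‖Complex.exp w - P w‖ ≤ ‖w‖ ^ 4 := by
      have := Complex.exp_bound hw1 (by norm_num : 0 < 4)
      rw [hPsum w] at this
      refine le_trans this ?_
      have hw4 : (0:ℝ) ≤ ‖w‖ ^ 4 := by positivity
      have : ((4:ℕ).succ : ℝ) * (((4:ℕ).factorial : ℝ) * 4)⁻¹ ≤ 1 := by
        norm_num [Nat.factorial]
      nlinarith
    have hE2 : ‖Complex.exp (-w) - P (-w)‖ ≤ ‖w‖ ^ 4 := by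
      have hw1' : ‖-w‖ ≤ 1 := by rwa [norm_neg]
      have := Complex.exp_bound hw1' (by norm_num : 0 < 4)
      rw [hPsum (-w)] at this
      rw [norm_neg] at this
      refine le_trans this ?_
      have hw4 : (0:ℝ) ≤ ‖w‖ ^ 4 := by positivity
      have : ((4:ℕ).succ : ℝ) * (((4:ℕ).factorial : ℝ) * 4)⁻¹ ≤ 1 := by
        norm_num [Nat.factorial]
      nlinarith
    have hkey : psiC w - (2/3) * w^3 =
        (Complex.exp w - P w) * (w - 1) + (Complex.exp (-w) - P (-w)) * (w + 1) := by
      rw [psiC, hP]; ring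
    have hnum : ‖psiC w - (2/3) * w^3‖ ≤ 4 * ‖w‖ ^ 4 := by
      rw [hkey]
      calc ‖(Complex.exp w - P w) * (w - 1) + (Complex.exp (-w) - P (-w)) * (w + 1)‖
          ≤ ‖(Complex.exp w - P w) * (w - 1)‖
            + ‖(Complex.exp (-w) - P (-w)) * (w + 1)‖ := norm_add_le _ _
        _ ≤ ‖w‖ ^ 4 * 2 + ‖w‖ ^ 4 * 2 := by
            rw [norm_mul, norm_mul]
            have hb1 : ‖w - 1‖ ≤ 2 := by
              calc ‖w - 1‖ ≤ ‖w‖ + ‖1‖ :=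
                    norm_sub_le _ _
                _ ≤ 2 := by rw [norm_one]; linarith
            have hb2 : ‖w + 1‖ ≤ 2 := by
              calc ‖w + 1‖ ≤ ‖w‖ + ‖1‖ :=
                    norm_add_le _ _
                _ ≤ 2 := by rw [norm_one]; linarith
            have h0 : (0:ℝ) ≤ ‖w‖ ^ 4 := by positivity
            gcongr <;> first
              | exact hE1 | exact hE2 | exact hb1 | exact hb2
        _ = 4 * ‖w‖ ^ 4 := by ring
    have hw3 : ‖w‖ ^ 3 ≠ 0 := by
      simp [pow_ne_zero, hw2]
    have heq : psiC w / w ^ 3 - 2/3 = (psiC w - (2/3) * w^3) / w^3 := by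
      field_simp
    rw [heq, norm_div, norm_pow]
    rw [div_le_iff₀ (by positivity : (0:ℝ) < ‖w‖ ^ 3)]
    calc ‖psiC w - 2 / 3 * w ^ 3‖ ≤ 4 * ‖w‖ ^ 4 := hnum
      _ = 4 * ‖w‖ * ‖w‖ ^ 3 := by ring
  have hb : Tendsto (fun w : ℂ => 4 * ‖w‖) (nhds 0) (nhds (4 * ‖(0:ℂ)‖)) :=
    (continuous_norm.tendsto (0:ℂ)).const_mul 4
  rw [norm_zero, mul_zero] at hb
  exact squeeze_zero' (Filter.Eventually.of_forall (fun w => norm_nonneg _)) hbd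
    (hb.mono_left nhdsWithin_le_nhds)

lemma sinh_div_tendsto :
    Tendsto (fun w : ℂ => Complex.sinh w / w) (nhdsWithin 0 {(0:ℂ)}ᶜ) (nhds 1) := by
  have h := Complex.hasDerivAt_sinh 0
  rw [Complex.cosh_zero] at h
  have h2 := hasDerivAt_iff_tendsto_slope.mp h
  apply h2.congr
  intro w
  rw [slope_def_field, Complex.sinh_zero, sub_zero, sub_zero]

lemma Gid {z : ℂ} (hz0 : z ≠ 0) (hs : Complex.sinh (z/2) ≠ 0) :
    (ccoth (z/2) - 2/z) / z
      = (psiC (z/2) / (z/2)^3) * (1/4) * (Complex.sinh (z/2) / (z/2))⁻¹ := by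
  have hw : z/2 ≠ 0 := by simpa using hz0
  have hsinh : Complex.sinh (z/2) = (Complex.exp (z/2) - Complex.exp (-(z/2))) / 2 := rfl
  have hcosh : Complex.cosh (z/2) = (Complex.exp (z/2) + Complex.exp (-(z/2))) / 2 := rfl
  have hpsi : psiC (z/2) = 2*(z/2)*Complex.cosh (z/2) - 2*Complex.sinh (z/2) := by
    rw [psiC, hsinh, hcosh]; ring
  rw [ccoth, hpsi]
  field_simp
  ring

lemma coth_part_tendsto :
    Tendsto (fun z : ℂ => (ccoth (z/2) - 2/z) / z) (nhdsWithin 0 {(0:ℂ)}ᶜ)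
      (nhds (1/6)) := by
  have hhalf : Tendsto (fun z : ℂ => z/2) (nhdsWithin 0 {(0:ℂ)}ᶜ) (nhdsWithin 0 {(0:ℂ)}ᶜ) := by
    rw [tendsto_nhdsWithin_iff]
    constructor
    · have : Tendsto (fun z : ℂ => z/2) (nhds 0) (nhds (0/2)) :=
        (continuous_id.div_const 2).tendsto 0
      rw [zero_div] at this
      exact this.mono_left nhdsWithin_le_nhds
    · filter_upwards [self_mem_nhdsWithin] with z hz
      simp only [Set.mem_compl_iff, Set.mem_singleton_iff] at hz ⊢
      simpa using hz
  have h1 : Tendsto (fun z : ℂ => psiC (z/2) / (z/2)^3) (nhdsWithin 0 {(0:ℂ)}ᶜ)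
      (nhds (2/3)) := psi_tendsto.comp hhalf
  have h2 : Tendsto (fun z : ℂ => Complex.sinh (z/2) / (z/2)) (nhdsWithin 0 {(0:ℂ)}ᶜ)
      (nhds 1) := sinh_div_tendsto.comp hhalf
  have h3 : Tendsto (fun z : ℂ => (Complex.sinh (z/2) / (z/2))⁻¹) (nhdsWithin 0 {(0:ℂ)}ᶜ)
      (nhds 1) := by
    have := h2.inv₀ one_ne_zero
    rwa [inv_one] at this
  have hcomb : Tendsto (fun z : ℂ => (psiC (z/2) / (z/2)^3) * (1/4)
      * (Complex.sinh (z/2) / (z/2))⁻¹) (nhdsWithin 0 {(0:ℂ)}ᶜ)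
      (nhds ((2/3) * (1/4) * 1)) := (h1.mul_const (1/4)).mul h3
  have hval : ((2:ℂ)/3) * (1/4) * 1 = 1/6 := by norm_num
  rw [hval] at hcomb
  apply hcomb.congr'
  have hev : ∀ᶠ z : ℂ in nhdsWithin 0 {(0:ℂ)}ᶜ, z ≠ 0 ∧ ‖z‖ < 2*Real.pi := by
    have ha : ∀ᶠ z : ℂ in nhdsWithin 0 {(0:ℂ)}ᶜ, ‖z‖ < 2*Real.pi := by
      apply Filter.Eventually.filter_mono nhdsWithin_le_nhds
      filter_upwards [Metric.ball_mem_nhds (0:ℂ) (by positivity : (0:ℝ) < 2*Real.pi)] with w hw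
      rwa [Metric.mem_ball, dist_zero_right] at hw
    have hb : ∀ᶠ z : ℂ in nhdsWithin 0 {(0:ℂ)}ᶜ, z ≠ 0 := by
      filter_upwards [self_mem_nhdsWithin] with w hw
      simpa using hw
    exact hb.and ha
  filter_upwards [hev] with z hz
  exact (Gid hz.1 (sinh_half_ne_zero hz.1 hz.2)).symm




/-- Let `t > 0`. The series defining `Ĥ(t,·)` converges locally uniformly on
`{z : 0 < |z| < min(2t, 2π)}`; the series `∑_{k≥1} 1/sinh²(kt)` converges; and
`lim_{z→0} (Ĥ(t,z) − 2/z)/z = 1/6 − ∑_{k=1}^∞ 1/sinh²(kt)`. -/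
theorem statement13 (t : ℝ) (ht : 0 < t) :
    TendstoLocallyUniformlyOn
      (fun N : ℕ => fun z : ℂ => ccoth (z / 2) + ∑ k ∈ Finset.range N,
        (ccoth ((z - 2 * ((k : ℂ) + 1) * (t : ℂ)) / 2)
          + ccoth ((z + 2 * ((k : ℂ) + 1) * (t : ℂ)) / 2)))
      (fun z => HHat t z) Filter.atTop
      {z : ℂ | 0 < ‖z‖ ∧ ‖z‖ < min (2 * t) (2 * Real.pi)} ∧
    Summable (fun k : ℕ => 1 / Real.sinh (((k : ℝ) + 1) * t) ^ 2) ∧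
    Filter.Tendsto (fun z : ℂ => (HHat t z - 2 / z) / z)
      (nhdsWithin 0 {(0 : ℂ)}ᶜ)
      (nhds (((1 / 6 - ∑' k : ℕ, 1 / Real.sinh (((k : ℝ) + 1) * t) ^ 2 : ℝ) : ℂ))) := by
  have hsum2 := summable_inv_sinh ht
  have hball0 : (0:ℂ) ∈ Metric.ball (0:ℂ) (2*t) := by
    rw [Metric.mem_ball, dist_self]; linarith
  refine ⟨?_, hsum2, ?_⟩
  · -- Part 1
    have hopen : IsOpen {z : ℂ | 0 < ‖z‖ ∧ ‖z‖ < min (2*t) (2*Real.pi)} := by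
      apply IsOpen.and
      · exact isOpen_lt continuous_const continuous_norm
      · exact isOpen_lt continuous_norm continuous_const
    rw [tendstoLocallyUniformlyOn_iff_forall_isCompact hopen]
    intro K hKS hK
    have hKball : K ⊆ Metric.ball (0:ℂ) (2*t) := by
      intro z hz
      have := (hKS hz).2
      rw [Metric.mem_ball, dist_zero_right]
      exact lt_of_lt_of_le this (min_le_left _ _)
    have h2 := sterm_TU_compact ht hK hKball
    have h1 : TendstoUniformlyOn (fun _ : ℕ => fun z : ℂ => ccoth (z/2))
        (fun z : ℂ => ccoth (z/2)) atTop K := by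
      intro u hu
      filter_upwards with n x hx
      exact refl_mem_uniformity hu
    have hadd := h1.add h2
    have hFeq : (fun N : ℕ => fun z : ℂ => ccoth (z / 2) + ∑ k ∈ Finset.range N,
        (ccoth ((z - 2 * ((k : ℂ) + 1) * (t : ℂ)) / 2)
          + ccoth ((z + 2 * ((k : ℂ) + 1) * (t : ℂ)) / 2)))
        = ((fun _ : ℕ => fun z : ℂ => ccoth (z/2))
          + (fun N z => ∑ k ∈ Finset.range N, sterm t k z)) := by
      funext N z
      simp only [Pi.add_apply, sterm]
    have hfeq : (fun z => HHat t z)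
        = ((fun z : ℂ => ccoth (z/2)) + (fun z => ∑' k, sterm t k z)) := by
      funext z
      simp only [Pi.add_apply, HHat, sterm]
    rw [hFeq, hfeq]
    exact hadd
  · -- Part 3
    set hfun : ℂ → ℂ := fun z => ∑' k, sterm t k z with hhfun
    have hTLU := sterm_TLU ht
    have hdiff_each : ∀ᶠ N in atTop, DifferentiableOn ℂ
        (fun z => ∑ k ∈ Finset.range N, sterm t k z) (Metric.ball (0:ℂ) (2*t)) := by
      apply Filter.Eventually.of_forall
      intro N z hz
      have hza : ‖z‖ < 2*t := by
        rwa [Metric.mem_ball, dist_zero_right] at hz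
      exact (HasDerivAt.fun_sum (fun k _ => sterm_hasDerivAt ht hza k)).differentiableAt.differentiableWithinAt
    have hdiff := hTLU.differentiableOn hdiff_each Metric.isOpen_ball
    have hda : DifferentiableAt ℂ hfun 0 :=
      hdiff.differentiableAt (Metric.isOpen_ball.mem_nhds hball0)
    have hderivTLU := hTLU.deriv hdiff_each Metric.isOpen_ball
    have hptw : Tendsto (fun N => deriv (fun z => ∑ k ∈ Finset.range N, sterm t k z) 0)
        atTop (nhds (deriv hfun 0)) := hderivTLU.tendsto_at hball0
    have h0a : ‖(0:ℂ)‖ < 2*t := by rw [norm_zero]; linarith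
    have hderN : ∀ N : ℕ, deriv (fun z => ∑ k ∈ Finset.range N, sterm t k z) 0
        = ∑ k ∈ Finset.range N, (-(((1 / Real.sinh (((k:ℝ)+1)*t)^2 : ℝ)) : ℂ)) := by
      intro N
      exact (HasDerivAt.fun_sum (fun k _ => sterm_deriv_zero ht k)).deriv
    have hsumc : Summable (fun k : ℕ => -(((1 / Real.sinh (((k:ℝ)+1)*t)^2 : ℝ)) : ℂ)) :=
      (Complex.summable_ofReal.mpr hsum2).neg
    have htsum := hsumc.hasSum.tendsto_sum_nat
    have hderval : deriv hfun 0 = ∑' k : ℕ, (-(((1 / Real.sinh (((k:ℝ)+1)*t)^2 : ℝ)) : ℂ)) := by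
      apply tendsto_nhds_unique _ htsum
      convert hptw using 2 with N
      exact (hderN N).symm
    have hder := hda.hasDerivAt
    rw [hderval] at hder
    have hzero : hfun 0 = 0 := by
      have : hfun 0 = ∑' k : ℕ, (0:ℂ) := tsum_congr (fun k => sterm_zero k)
      rw [this, tsum_zero]
    have hslope := hasDerivAt_iff_tendsto_slope.mp hder
    have hHtend : Tendsto (fun z : ℂ => hfun z / z) (nhdsWithin 0 {(0:ℂ)}ᶜ)
        (nhds (∑' k : ℕ, (-(((1 / Real.sinh (((k:ℝ)+1)*t)^2 : ℝ)) : ℂ)))) := by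
      apply hslope.congr
      intro z
      rw [slope_def_field, hzero, sub_zero, sub_zero]
    have hcomb := coth_part_tendsto.add hHtend
    have hval : ((1/6 : ℂ) + ∑' k : ℕ, (-(((1 / Real.sinh (((k:ℝ)+1)*t)^2 : ℝ)) : ℂ)))
        = (((1 / 6 - ∑' k : ℕ, 1 / Real.sinh (((k : ℝ) + 1) * t) ^ 2 : ℝ) : ℂ)) := by
      rw [tsum_neg]
      push_cast [Complex.ofReal_tsum]
      ring
    rw [hval] at hcomb
    apply hcomb.congr
    intro z
    have : HHat t z = ccoth (z/2) + hfun z := rfl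
    rw [this]
    ring
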